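/- Let H be a finite forest with a proper 2-coloring of its vertices into 'left' and 'right' classes, and suppose H has at least one edge, an injective labeling of its edges by reals, and no left vertex of H is a leaf. Then H has a right leaf y whose unique neighbor w satisfies: the edge yw has either the smallest or the largest label among all edges incident to w. -/

import Mathlib

open SimpleGraph

/-- In a path starting at `v`, any edge containing `v` joins it to the second vertex. -/
private lemma aux_snd {V : Type} {G : SimpleGraph V} {v u x : V} (p : G.Walk v u)
    (hp : p.IsPath) (hx : s(v, x) ∈ p.edges) : x = p.getVert 1 := by
  cases p with
  | nil => simp at hx
  | cons h q =>
    rw [Walk.edges_cons, List.mem_cons] at hx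
    rcases hx with hx | hx
    · rw [Sym2.eq_iff] at hx
      rcases hx with ⟨-, rfl⟩ | ⟨hvb, -⟩
      · simp [Walk.getVert_cons_succ]
      · exact absurd hvb h.ne
    · exact absurd (q.fst_mem_support_of_mem_edges hx)
        ((Walk.cons_isPath_iff h q).mp hp).2

/-- A finite forest with an edge has a leaf. -/
private lemma exists_leaf {V : Type} [Fintype V] (H : SimpleGraph V) (hforest : H.IsAcyclic)
    (hE : H.edgeSet.Nonempty) : ∃ v w, H.Adj v w ∧ H.neighborSet v = {w} := by
  classical
  obtain ⟨e, he⟩ := hE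
  obtain ⟨a, b, he⟩ : ∃ a b, s(a, b) ∈ H.edgeSet := by
    revert he; induction e using Sym2.ind with
    | _ a b => exact fun he => ⟨a, b, he⟩
  rw [mem_edgeSet] at he
  set P : ℕ → Prop := fun n => ∃ (u v : V) (p : H.Walk u v), p.IsPath ∧ p.length = n with hP
  have hbound : ∀ m, P m → m ≤ Fintype.card V := by
    rintro m ⟨u, v, p, hp, rfl⟩; exact hp.length_lt.le
  have hP1 : P 1 := ⟨a, b, Walk.cons he Walk.nil, by simp [Walk.cons_isPath_iff, he.ne], by simp⟩
  set n := Nat.findGreatest P (Fintype.card V) with hn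
  have hPn : P n := Nat.findGreatest_spec (hbound 1 hP1) hP1
  have hn1 : 1 ≤ n := Nat.le_findGreatest (hbound 1 hP1) hP1
  obtain ⟨u, v, p, hp, hlen⟩ := hPn
  have hrp : p.reverse.IsPath := hp.reverse
  have hrnil : ¬ p.reverse.Nil := by
    rw [Walk.nil_iff_length_eq, Walk.length_reverse, hlen]; omega
  refine ⟨v, p.reverse.getVert 1, p.reverse.adj_snd hrnil, ?_⟩
  ext x
  simp only [mem_neighborSet, Set.mem_singleton_iff]
  constructor
  · intro hvx
    by_cases hsup : x ∈ p.reverse.support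
    · by_cases hxw : x = p.reverse.getVert 1
      · exact hxw
      · exfalso
        have hq := hrp.takeUntil hsup
        refine hforest (Walk.cons hvx.symm (p.reverse.takeUntil x hsup)) ?_
        rw [Walk.cons_isCycle_iff]
        refine ⟨hq, fun hmem => hxw ?_⟩
        have hmem' : s(v, x) ∈ p.reverse.edges := by
          rw [Sym2.eq_swap] at hmem
          exact Walk.edges_takeUntil_subset _ hsup hmem
        exact aux_snd p.reverse hrp hmem'
    · have hlong : P (n + 1) := by
        refine ⟨x, u, Walk.cons hvx.symm p.reverse, ?_, by simp [hlen]⟩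
        rw [Walk.cons_isPath_iff]; exact ⟨hrp, hsup⟩
      exact absurd hlong (Nat.findGreatest_is_greatest (by omega) (hbound _ hlong))
  · rintro rfl
    exact p.reverse.adj_snd hrnil

private lemma mem_inc {V : Type} {H : SimpleGraph V} {w : V} {e : Sym2 V}
    (he : e ∈ H.incidenceSet w) : ∃ x, H.Adj w x ∧ e = s(w, x) := by
  obtain ⟨heE, hwe⟩ := he
  revert heE hwe
  induction e using Sym2.ind with
  | _ a b =>
    intro heE hwe
    rw [Sym2.mem_iff] at hwe
    rw [mem_edgeSet] at heE
    rcases hwe with rfl | rfl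
    · exact ⟨b, heE, rfl⟩
    · exact ⟨a, heE.symm, Sym2.eq_swap⟩

private lemma main_ind {V : Type} [Fintype V] : ∀ (n : ℕ) (H : SimpleGraph V),
    H.edgeSet.ncard ≤ n → H.IsAcyclic → ∀ (color : V → Bool),
    (∀ a b, H.Adj a b → color a ≠ color b) → H.edgeSet.Nonempty →
    ∀ (L : Sym2 V → ℝ), Set.InjOn L H.edgeSet →
    (∀ v, color v = true → (H.neighborSet v).ncard ≠ 1) →
    ∃ y w, color y = false ∧ (H.neighborSet y).ncard = 1 ∧ H.Adj y w ∧
      ((∀ e ∈ H.incidenceSet w, L s(y, w) ≤ L e) ∨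
       (∀ e ∈ H.incidenceSet w, L e ≤ L s(y, w))) := by
  intro n
  induction n with
  | zero =>
    intro H hcard _ _ _ hE _ _ _
    exfalso
    rw [Nat.le_zero] at hcard
    rw [Set.ncard_eq_zero (Set.toFinite _)] at hcard
    exact hE.ne_empty hcard
  | succ n ih =>
    intro H hcard hforest color hproper hE L hL hleft
    obtain ⟨y, w, hyw, hnbr⟩ := exists_leaf H hforest hE
    have hy1 : (H.neighborSet y).ncard = 1 := by rw [hnbr]; simp
    have hyc : color y = false := by
      cases hc : color y with
      | false => rfl
      | true => exact absurd hy1 (hleft y hc)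
    have hwc : color w = true := by
      have h := hproper y w hyw
      rw [hyc] at h
      cases hcw : color w with
      | false => rw [hcw] at h; exact absurd rfl h
      | true => rfl
    by_cases hext : (∀ e ∈ H.incidenceSet w, L s(y, w) ≤ L e) ∨
        (∀ e ∈ H.incidenceSet w, L e ≤ L s(y, w))
    · exact ⟨y, w, hyc, hy1, hyw, hext⟩
    push_neg at hext
    obtain ⟨⟨e1, he1, he1'⟩, ⟨e2, he2, he2'⟩⟩ := hext
    -- he1' : L e1 < L s(y,w), he2' : L s(y,w) < L e2
    obtain ⟨x1, hx1adj, rfl⟩ := mem_inc he1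
    obtain ⟨x2, hx2adj, rfl⟩ := mem_inc he2
    have hyne : y ≠ w := hyw.ne
    have hx1y : x1 ≠ y := by
      rintro rfl
      rw [Sym2.eq_swap] at he1'
      exact lt_irrefl _ he1'
    have hx2y : x2 ≠ y := by
      rintro rfl
      rw [Sym2.eq_swap] at he2'
      exact lt_irrefl _ he2'
    have hx12 : x1 ≠ x2 := by
      rintro rfl
      exact absurd rfl (ne_of_lt (he1'.trans he2'))
    have hne1 : s(w, x1) ≠ s(y, w) := by
      intro h
      rcases Sym2.eq_iff.mp h with ⟨h1, -⟩ | ⟨-, h2⟩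
      · exact hyne h1.symm
      · exact hx1y h2
    have hne2 : s(w, x2) ≠ s(y, w) := by
      intro h
      rcases Sym2.eq_iff.mp h with ⟨h1, -⟩ | ⟨-, h2⟩
      · exact hyne h1.symm
      · exact hx2y h2
    set H' := H.deleteEdges {s(y, w)} with hH'
    have hH'adj : ∀ a b, H'.Adj a b ↔ H.Adj a b ∧ s(a, b) ≠ s(y, w) := by
      intro a b; rw [hH', deleteEdges_adj, Set.mem_singleton_iff]
    have hH'le : H' ≤ H := deleteEdges_le _
    have hacy' : H'.IsAcyclic := fun v c hc => hforest (c.mapLe hH'le) (hc.mapLe _)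
    have hedge' : H'.edgeSet = H.edgeSet \ {s(y, w)} := edgeSet_deleteEdges _
    have hywE : s(y, w) ∈ H.edgeSet := H.mem_edgeSet.mpr hyw
    have hcard' : H'.edgeSet.ncard ≤ n := by
      rw [hedge', Set.ncard_diff_singleton_of_mem hywE]
      omega
    have hE' : H'.edgeSet.Nonempty := by
      refine ⟨s(w, x2), ?_⟩
      rw [hedge']
      exact ⟨H.mem_edgeSet.mpr hx2adj, hne2⟩
    have hproper' : ∀ a b, H'.Adj a b → color a ≠ color b :=
      fun a b hab => hproper a b ((hH'adj a b).mp hab).1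
    have hL' : Set.InjOn L H'.edgeSet := hL.mono (by rw [hedge']; exact Set.diff_subset)
    have hnb_other : ∀ u, u ≠ y → u ≠ w → H'.neighborSet u = H.neighborSet u := by
      intro u huy huw
      ext z
      simp only [mem_neighborSet, hH'adj]
      constructor
      · exact fun h => h.1
      · intro h
        refine ⟨h, ?_⟩
        intro h'
        rcases Sym2.eq_iff.mp h' with ⟨h1, -⟩ | ⟨h1, -⟩
        · exact huy h1
        · exact huw h1
    have hnb_y : H'.neighborSet y = ∅ := by
      ext z
      simp only [mem_neighborSet, hH'adj, Set.mem_empty_iff_false, iff_false, not_and]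
      intro hz
      have : z ∈ H.neighborSet y := hz
      rw [hnbr, Set.mem_singleton_iff] at this
      subst this
      simp
    have hnb_w : H'.neighborSet w = H.neighborSet w \ {y} := by
      ext z
      simp only [mem_neighborSet, hH'adj, Set.mem_diff, Set.mem_singleton_iff]
      constructor
      · rintro ⟨h1, h2⟩
        refine ⟨h1, ?_⟩
        rintro rfl
        exact h2 (Sym2.eq_swap)
      · rintro ⟨h1, h2⟩
        refine ⟨h1, ?_⟩
        intro h'
        rcases Sym2.eq_iff.mp h' with ⟨ha, -⟩ | ⟨-, hb⟩
        · exact hyne ha.symm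
        · exact h2 hb
    have hleft' : ∀ v, color v = true → (H'.neighborSet v).ncard ≠ 1 := by
      intro v hv
      by_cases hvw : v = w
      · subst hvw
        have h2lt : 1 < (H'.neighborSet v).ncard := by
          rw [Set.one_lt_ncard (Set.toFinite _)]
          refine ⟨x1, ?_, x2, ?_, hx12⟩
          · rw [hnb_w]; exact ⟨hx1adj, hx1y⟩
          · rw [hnb_w]; exact ⟨hx2adj, hx2y⟩
        omega
      · have hvy : v ≠ y := by
          rintro rfl
          rw [hyc] at hv
          exact Bool.false_ne_true hv
        rw [hnb_other v hvy hvw]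
        exact hleft v hv
    obtain ⟨y', w', hy'c, hy'1, hy'adj, hy'ext⟩ :=
      ih H' hcard' hacy' color hproper' hE' L hL' hleft'
    have hy'y : y' ≠ y := by
      intro h
      rw [h, hnb_y] at hy'1
      simp at hy'1
    have hy'w : y' ≠ w := by
      rintro rfl
      rw [hy'c] at hwc
      exact Bool.false_ne_true hwc
    have hw'y : w' ≠ y := by
      intro h
      have h2 : y' ∈ H'.neighborSet y := by rw [← h]; exact hy'adj.symm
      rw [hnb_y] at h2
      exact h2
    have hy1' : (H.neighborSet y').ncard = 1 := by
      rw [← hnb_other y' hy'y hy'w]; exact hy'1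
    have hadj' : H.Adj y' w' := ((hH'adj _ _).mp hy'adj).1
    have hincsub : H'.incidenceSet w' ⊆ H.incidenceSet w' := by
      rintro e ⟨heE, hue⟩
      rw [hedge'] at heE
      exact ⟨heE.1, hue⟩
    by_cases hw'w : w' = w
    · subst hw'w
      have hincw : ∀ e ∈ H.incidenceSet w', e = s(y, w') ∨ e ∈ H'.incidenceSet w' := by
        rintro e ⟨heE, hwe⟩
        by_cases hesy : e = s(y, w')
        · exact Or.inl hesy
        · refine Or.inr ⟨?_, hwe⟩
          rw [hedge']
          exact ⟨heE, hesy⟩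
      have he1mem : s(w', x1) ∈ H'.incidenceSet w' := by
        refine ⟨?_, by simp⟩
        rw [hedge']
        exact ⟨H.mem_edgeSet.mpr hx1adj, hne1⟩
      have he2mem : s(w', x2) ∈ H'.incidenceSet w' := by
        refine ⟨?_, by simp⟩
        rw [hedge']
        exact ⟨H.mem_edgeSet.mpr hx2adj, hne2⟩
      refine ⟨y', w', hy'c, hy1', hadj', ?_⟩
      rcases hy'ext with hmin | hmax
      · left
        intro e he
        rcases hincw e he with rfl | he'
        · exact (hmin _ he1mem).trans he1'.le
        · exact hmin e he'
      · right
        intro e he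
        rcases hincw e he with rfl | he'
        · exact he2'.le.trans (hmax _ he2mem)
        · exact hmax e he'
    · have hinceq : H.incidenceSet w' = H'.incidenceSet w' := by
        apply Set.Subset.antisymm _ hincsub
        rintro e ⟨heE, hwe⟩
        refine ⟨?_, hwe⟩
        rw [hedge']
        refine ⟨heE, ?_⟩
        rintro rfl
        rw [Sym2.mem_iff] at hwe
        rcases hwe with rfl | rfl
        · exact hw'y rfl
        · exact hw'w rfl
      refine ⟨y', w', hy'c, hy1', hadj', ?_⟩
      rw [hinceq]
      exact hy'ext

/-- In a finite forest `H` with a proper 2-coloring (left = `true`, right = `false`),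
at least one edge, distinctly labeled edges, and no left leaf, there is a right leaf `y`
whose unique neighbor `w` is joined to `y` by an edge whose label is extremal
(smallest or largest) among the edges incident to `w`. -/
theorem stmt4 {V : Type} [Fintype V] (H : SimpleGraph V) (hforest : H.IsAcyclic)
    (color : V → Bool) (hproper : ∀ a b, H.Adj a b → color a ≠ color b)
    (hE : H.edgeSet.Nonempty) (L : Sym2 V → ℝ) (hL : Set.InjOn L H.edgeSet)
    (hleft : ∀ v, color v = true → (H.neighborSet v).ncard ≠ 1) :
    ∃ y w, color y = false ∧ (H.neighborSet y).ncard = 1 ∧ H.Adj y w ∧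
      ((∀ e ∈ H.incidenceSet w, L s(y, w) ≤ L e) ∨
       (∀ e ∈ H.incidenceSet w, L e ≤ L s(y, w))) := by
  exact main_ind H.edgeSet.ncard H le_rfl hforest color hproper hE L hL hleft
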